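/- (Sufficiency direction of Zubov's theorem.) Let D ⊆ ℝⁿ be an open set containing the origin, let f : ℝⁿ → ℝⁿ be locally Lipschitz with f(0) = 0, and suppose there exist a continuously differentiable function W : ℝⁿ → ℝ and a continuous function η : ℝⁿ → ℝ such that: (1) 0 < W(x) < 1 for all x ∈ D \ {0} and W(0) = 0; (2) η(0) = 0 and η(x) > 0 for all x ∈ D \ {0}; (3) for every sufficiently small c₃ > 0 there exist c₁ > 0 and c₂ > 0 such that for all x ∈ D with ‖x‖ ≥ c₃ one has W(x) > c₁ and η(x) > c₂; (4) W(x) → 1 as x → y for every y ∈ ∂D; (5) ⟨∇W(x), f(x)⟩ + η(x)·(1 − W(x)) = 0 for all x ∈ D. Then every solution x(·) of ẋ = f(x) with x(0) ∈ D satisfies x(t) ∈ D for all t ≥ 0 and x(t) → 0 as t → ∞; that is, D is contained in the domain of attraction of the origin. -/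

import Mathlib

open Filter Topology

theorem zubov_sufficiency {n : ℕ}
    (D : Set (EuclideanSpace ℝ (Fin n))) (hD : IsOpen D) (h0D : (0 : EuclideanSpace ℝ (Fin n)) ∈ D)
    (f : EuclideanSpace ℝ (Fin n) → EuclideanSpace ℝ (Fin n))
    (hf : LocallyLipschitz f) (hf0 : f 0 = 0)
    (W : EuclideanSpace ℝ (Fin n) → ℝ) (hW : ContDiff ℝ 1 W)
    (η : EuclideanSpace ℝ (Fin n) → ℝ) (hη : Continuous η)
    (h1 : (∀ x ∈ D, x ≠ 0 → 0 < W x ∧ W x < 1) ∧ W 0 = 0)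
    (h2 : η 0 = 0 ∧ ∀ x ∈ D, x ≠ 0 → 0 < η x)
    (h3 : ∃ ε > (0 : ℝ), ∀ c₃ : ℝ, 0 < c₃ → c₃ < ε →
        ∃ c₁ > (0 : ℝ), ∃ c₂ > (0 : ℝ), ∀ x ∈ D, c₃ ≤ ‖x‖ → c₁ < W x ∧ c₂ < η x)
    (h4 : ∀ y ∈ frontier D, Tendsto W (𝓝[D] y) (𝓝 1))
    (h5 : ∀ x ∈ D, inner ℝ (gradient W x) (f x) + η x * (1 - W x) = (0 : ℝ)) :
    ∀ sol : ℝ → EuclideanSpace ℝ (Fin n),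
      (∀ t ≥ (0 : ℝ), HasDerivAt sol (f (sol t)) t) → sol 0 ∈ D →
      (∀ t ≥ (0 : ℝ), sol t ∈ D) ∧ Tendsto sol atTop (𝓝 0) := by
  intro sol hsol h0
  have hWcont : Continuous W := hW.continuous
  have hWle1 : ∀ x ∈ D, W x ≤ 1 := by
    intro x hx
    rcases eq_or_ne x 0 with rfl | hne
    · rw [h1.2]; norm_num
    · exact le_of_lt (h1.1 x hx hne).2
  have hWnonneg : ∀ x ∈ D, 0 ≤ W x := by
    intro x hx
    rcases eq_or_ne x 0 with rfl | hne
    · rw [h1.2]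
    · exact le_of_lt (h1.1 x hx hne).1
  have hηnonneg : ∀ x ∈ D, 0 ≤ η x := by
    intro x hx
    rcases eq_or_ne x 0 with rfl | hne
    · rw [h2.1]
    · exact le_of_lt (h2.2 x hx hne)
  have hW0lt1 : W (sol 0) < 1 := by
    rcases eq_or_ne (sol 0) 0 with h | h
    · rw [h, h1.2]; norm_num
    · exact (h1.1 _ h0 h).2
  set g : ℝ → ℝ := fun t => W (sol t) with hgdef
  have hcontSol : ∀ t : ℝ, 0 ≤ t → ContinuousAt sol t := fun t ht => (hsol t ht).continuousAt
  have hg : ∀ t : ℝ, 0 ≤ t →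
      HasDerivAt g ((inner ℝ (gradient W (sol t)) (f (sol t)) : ℝ)) t := by
    intro t ht
    have hWd : HasGradientAt W (gradient W (sol t)) (sol t) :=
      ((hW.differentiable one_ne_zero) (sol t)).hasGradientAt
    have h' := hWd.hasFDerivAt.comp_hasDerivAt t (hsol t ht)
    rw [InnerProductSpace.toDual_apply_apply] at h'
    exact h'
  have hg' : ∀ t : ℝ, 0 ≤ t → sol t ∈ D →
      HasDerivAt g (-(η (sol t) * (1 - W (sol t)))) t := by
    intro t ht hmem
    have h5' := h5 (sol t) hmem
    have heq : (inner ℝ (gradient W (sol t)) (f (sol t)) : ℝ)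
        = -(η (sol t) * (1 - W (sol t))) := by linarith
    exact heq ▸ hg t ht
  have hgcont : ∀ t : ℝ, 0 ≤ t → ContinuousAt g t :=
    fun t ht => hWcont.continuousAt.comp (hcontSol t ht)
  have hanti : ∀ s : Set ℝ, Convex ℝ s → (∀ t ∈ s, (0:ℝ) ≤ t) →
      (∀ t ∈ interior s, sol t ∈ D) → AntitoneOn g s := by
    intro s hs hs0 hsD
    apply antitoneOn_of_deriv_nonpos hs
    · exact fun t ht => (hgcont t (hs0 t ht)).continuousWithinAt
    · intro t ht
      exact (hg t (hs0 t (interior_subset ht))).differentiableAt.differentiableWithinAt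
    · intro t ht
      have h0t : 0 ≤ t := hs0 t (interior_subset ht)
      have hmem := hsD t ht
      rw [(hg' t h0t hmem).deriv]
      have hη' := hηnonneg _ hmem
      have hW' := hWle1 _ hmem
      nlinarith
  have hinv : ∀ t ≥ (0:ℝ), sol t ∈ D := by
    by_contra hcon
    push_neg at hcon
    obtain ⟨t₀, ht₀, hmem⟩ := hcon
    set S : Set ℝ := {t | 0 ≤ t ∧ sol t ∉ D} with hSdef
    have hSne : S.Nonempty := ⟨t₀, ht₀, hmem⟩
    have hbdd : BddBelow S := ⟨0, fun t ht => ht.1⟩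
    set T := sInf S with hTdef
    have hT0 : 0 ≤ T := le_csInf hSne (fun t ht => ht.1)
    have hTD : sol T ∉ D := by
      intro hmemT
      have hnb : sol ⁻¹' D ∈ 𝓝 T :=
        (hcontSol T hT0).preimage_mem_nhds (hD.mem_nhds hmemT)
      rcases Metric.mem_nhds_iff.1 hnb with ⟨δ, hδ, hball⟩
      obtain ⟨s, hsS, hslt⟩ := exists_lt_of_csInf_lt hSne (lt_add_of_pos_right T hδ)
      have hsge : T ≤ s := csInf_le hbdd hsS
      have : s ∈ Metric.ball T δ := by
        rw [Metric.mem_ball, Real.dist_eq, abs_lt]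
        constructor <;> linarith
      exact hsS.2 (hball this)
    have hTpos : 0 < T := by
      rcases hT0.lt_or_eq with h | h
      · exact h
      · exact absurd (h ▸ h0) hTD
    have hpre : ∀ s, 0 ≤ s → s < T → sol s ∈ D := by
      intro s hs0 hsT
      by_contra hc
      exact absurd (csInf_le hbdd ⟨hs0, hc⟩) (not_le.2 hsT)
    have hAnti : AntitoneOn g (Set.Icc 0 T) := by
      refine hanti _ (convex_Icc 0 T) (fun t ht => ht.1) ?_
      intro t ht
      rw [interior_Icc] at ht
      exact hpre t ht.1.le ht.2
    have hIoo : Set.Ioo 0 T ∈ 𝓝[<] T := Ioo_mem_nhdsLT_of_mem ⟨hTpos, le_rfl⟩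
    have htends : Tendsto sol (𝓝[<] T) (𝓝 (sol T)) :=
      ((hcontSol T hT0).tendsto).mono_left nhdsWithin_le_nhds
    have hevD : ∀ᶠ s in 𝓝[<] T, sol s ∈ D := by
      filter_upwards [hIoo] with s hs
      exact hpre s hs.1.le hs.2
    have hfront : sol T ∈ frontier D := by
      rw [frontier, hD.interior_eq]
      exact ⟨mem_closure_of_tendsto htends hevD, hTD⟩
    have htendsW : Tendsto g (𝓝[<] T) (𝓝 1) := by
      apply (h4 (sol T) hfront).comp
      rw [tendsto_nhdsWithin_iff]
      exact ⟨htends, hevD⟩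
    have hle : (1:ℝ) ≤ g 0 := by
      apply le_of_tendsto htendsW
      filter_upwards [hIoo] with s hs
      exact hAnti (Set.left_mem_Icc.2 hT0) ⟨hs.1.le, hs.2.le⟩ hs.1.le
    exact absurd hle (not_le.2 hW0lt1)
  refine ⟨hinv, ?_⟩
  have hAnti : AntitoneOn g (Set.Ici 0) := by
    refine hanti _ (convex_Ici 0) (fun t ht => ht) ?_
    intro t ht
    rw [interior_Ici] at ht
    exact hinv t ht.le
  obtain ⟨ε, hε, h3'⟩ := h3
  have hg0lt1 : g 0 < 1 := hW0lt1
  have hg0nonneg : 0 ≤ g 0 := hWnonneg _ h0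
  have hclaim : ∀ c : ℝ, 0 < c → ∃ t : ℝ, 0 ≤ t ∧ g t ≤ c := by
    intro c hc
    by_contra hcon
    push_neg at hcon
    have hWc : ContinuousAt W 0 := hWcont.continuousAt
    have hnbd : W ⁻¹' Set.Iio c ∈ 𝓝 (0 : EuclideanSpace ℝ (Fin n)) := by
      apply hWc
      rw [h1.2]
      exact Iio_mem_nhds hc
    rcases Metric.mem_nhds_iff.1 hnbd with ⟨δ, hδ, hball⟩
    set c₃ := min δ ε / 2 with hc₃def
    have hc₃pos : 0 < c₃ := by
      have := lt_min hδ hε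
      positivity
    have hc₃ε : c₃ < ε := by
      have h1' : c₃ ≤ ε / 2 := by
        rw [hc₃def]
        exact div_le_div_of_nonneg_right (min_le_right δ ε) (by norm_num)
      linarith
    have hc₃δ : c₃ < δ := by
      have h1' : c₃ ≤ δ / 2 := by
        rw [hc₃def]
        exact div_le_div_of_nonneg_right (min_le_left δ ε) (by norm_num)
      linarith
    obtain ⟨c₁, hc₁, c₂, hc₂, hkey⟩ := h3' c₃ hc₃pos hc₃ε
    have hnorm : ∀ t : ℝ, 0 ≤ t → c₃ ≤ ‖sol t‖ := by
      intro t ht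
      by_contra hlt
      push_neg at hlt
      have : sol t ∈ Metric.ball 0 δ := by
        rw [Metric.mem_ball, dist_zero_right]
        linarith
      exact absurd (hball this) (not_lt.2 (hcon t ht).le)
    set K := c₂ * (1 - g 0) with hKdef
    have hKpos : 0 < K := mul_pos hc₂ (by linarith)
    have hh : AntitoneOn (fun t => g t + K * t) (Set.Ici 0) := by
      apply antitoneOn_of_deriv_nonpos (convex_Ici 0)
      · intro t ht
        exact ((hgcont t ht).add ((continuous_const.mul continuous_id).continuousAt)).continuousWithinAt
      · intro t ht
        rw [interior_Ici] at ht
        exact (((hg t ht.le).add (by simpa using (hasDerivAt_id t).const_mul K)).differentiableAt).differentiableWithinAt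
      · intro t ht
        rw [interior_Ici] at ht
        have ht' : 0 ≤ t := ht.le
        have hDmem := hinv t ht'
        have hder : HasDerivAt (fun s => g s + K * s) (-(η (sol t) * (1 - W (sol t))) + K) t :=
          (hg' t ht' hDmem).add (by simpa using (hasDerivAt_id t).const_mul K)
        rw [hder.deriv]
        have hη' : c₂ < η (sol t) := (hkey _ hDmem (hnorm t ht')).2
        have hWt : g t ≤ g 0 := hAnti Set.self_mem_Ici ht' ht'
        have hWt1 : W (sol t) ≤ 1 := hWle1 _ hDmem
        have h1W : 1 - g 0 ≤ 1 - W (sol t) := by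
          simp only [hgdef] at hWt ⊢
          linarith
        nlinarith
    set t₁ := g 0 / K + 1 with ht₁def
    have ht₁ : 0 ≤ t₁ := by positivity
    have hineq := hh Set.self_mem_Ici (Set.mem_Ici.2 ht₁) ht₁
    simp only [mul_zero, add_zero] at hineq
    have hKt₁ : K * t₁ = g 0 + K := by
      rw [ht₁def]
      field_simp
    have hgt := hcon t₁ ht₁
    linarith
  rw [Metric.tendsto_atTop]
  intro ε' hε'
  set c₃ := min ε' ε / 2 with hc₃def
  have hc₃pos : 0 < c₃ := by
    have := lt_min hε' hε
    positivity
  have hc₃ε : c₃ < ε := by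
    have h1' : c₃ ≤ ε / 2 := by
      rw [hc₃def]
      exact div_le_div_of_nonneg_right (min_le_right ε' ε) (by norm_num)
    linarith
  have hc₃ε' : c₃ < ε' := by
    have h1' : c₃ ≤ ε' / 2 := by
      rw [hc₃def]
      exact div_le_div_of_nonneg_right (min_le_left ε' ε) (by norm_num)
    linarith
  obtain ⟨c₁, hc₁, c₂, hc₂, hkey⟩ := h3' c₃ hc₃pos hc₃ε
  obtain ⟨t₀, ht₀, hgt₀⟩ := hclaim c₁ hc₁
  refine ⟨t₀, fun t ht => ?_⟩
  have htnn : (0:ℝ) ≤ t := le_trans ht₀ ht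
  have hgle : g t ≤ c₁ := le_trans (hAnti (Set.mem_Ici.2 ht₀) (Set.mem_Ici.2 htnn) ht) hgt₀
  have hlt : ‖sol t‖ < c₃ := by
    by_contra hge
    push_neg at hge
    exact absurd hgle (not_le.2 (hkey _ (hinv t htnn) hge).1)
  rw [dist_zero_right]
  linarith
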